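/- For every constant c > 0 and every integer n ≥ 2, the product ∏_{k=n+1}^{n²} (c·k^(1/2)/(1 + c·k^(1/2))) is bounded above by C·e^(−c'·n^(1/2)) for some constants C, c' > 0 depending only on c. -/

import Mathlib

open Real Finset

theorem product_decay_estimate (c : ℝ) (hc : 0 < c) :
    ∃ C > 0, ∃ c' > 0, ∀ n : ℕ, 2 ≤ n →
      (∏ k ∈ Finset.Icc (n + 1) (n ^ 2),
          c * Real.sqrt k / (1 + c * Real.sqrt k))
        ≤ C * Real.exp (-c' * Real.sqrt n) := by
  refine ⟨1, one_pos, 1 / (2 * (1 + c)), by positivity, ?_⟩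
  intro n hn
  have hn1 : (1:ℝ) ≤ (n:ℝ) := by exact_mod_cast Nat.one_le_of_lt hn
  have hn2 : (2:ℝ) ≤ (n:ℝ) := by exact_mod_cast hn
  have hcn : (0:ℝ) < 1 + c * n := by positivity
  have key : (∏ k ∈ Finset.Icc (n + 1) (n ^ 2),
      c * Real.sqrt k / (1 + c * Real.sqrt k))
      ≤ ∏ _k ∈ Finset.Icc (n + 1) (n ^ 2), Real.exp (-(1 / (1 + c * n))) := by
    apply Finset.prod_le_prod
    · intro k _
      have : (0:ℝ) ≤ Real.sqrt k := Real.sqrt_nonneg _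
      positivity
    · intro k hk
      have hk2 : (k:ℝ) ≤ (n:ℝ) ^ 2 := by
        have := (Finset.mem_Icc.mp hk).2
        exact_mod_cast this
      have hsk : Real.sqrt k ≤ (n:ℝ) := by
        rw [show (n:ℝ) = Real.sqrt ((n:ℝ) ^ 2) from (Real.sqrt_sq (by positivity)).symm]
        exact Real.sqrt_le_sqrt hk2
      have hsk0 : (0:ℝ) ≤ Real.sqrt k := Real.sqrt_nonneg _
      have h0 : (0:ℝ) < 1 + c * Real.sqrt k := by positivity
      have heq : c * Real.sqrt k / (1 + c * Real.sqrt k) = 1 - 1 / (1 + c * Real.sqrt k) := by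
        field_simp
        ring
      rw [heq]
      have h1 : 1 - 1 / (1 + c * Real.sqrt k) ≤ Real.exp (-(1 / (1 + c * Real.sqrt k))) := by
        have := Real.add_one_le_exp (-(1 / (1 + c * Real.sqrt k)))
        linarith
      refine h1.trans (Real.exp_le_exp.mpr (neg_le_neg ?_))
      apply one_div_le_one_div_of_le h0
      have : c * Real.sqrt k ≤ c * n := mul_le_mul_of_nonneg_left hsk hc.le
      linarith
  have hcard : (Finset.Icc (n + 1) (n ^ 2)).card = n ^ 2 - n := by
    rw [Nat.card_Icc]
    omega
  rw [Finset.prod_const, hcard] at key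
  refine key.trans ?_
  rw [← Real.exp_nat_mul, one_mul, Real.exp_le_exp]
  have hcast : ((n ^ 2 - n : ℕ) : ℝ) = (n:ℝ) ^ 2 - n := by
    have : n ≤ n ^ 2 := Nat.le_self_pow (by norm_num) n
    push_cast [Nat.cast_sub this]
    ring
  rw [hcast]
  have hsqn : Real.sqrt n ≤ (n:ℝ) := by
    have h := Real.sqrt_le_sqrt (show (n:ℝ) ≤ (n:ℝ) ^ 2 by nlinarith)
    rwa [Real.sqrt_sq (by positivity)] at h
  have hsq0 : (0:ℝ) ≤ Real.sqrt n := Real.sqrt_nonneg _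
  -- goal: (n^2 - n) * -(1/(1+c*n)) ≤ -(1/(2*(1+c))) * √n
  rw [mul_neg, neg_mul, neg_le_neg_iff]
  rw [div_mul_eq_mul_div, one_mul, mul_one_div, div_le_div_iff₀ (by positivity) hcn]
  -- √n * (1 + c*n) ≤ (n^2 - n) * (2*(1+c))
  nlinarith [mul_le_mul_of_nonneg_right hsqn (le_of_lt hcn),
    mul_pos hc (mul_pos (lt_of_lt_of_le one_pos hn1) (lt_of_lt_of_le one_pos hn1))]
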